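/- Let A be an invertible n×n real matrix and k < n a positive integer. If A a is k-sparse for every k-sparse vector a in R^n, then A = P D for some permutation matrix P and invertible diagonal matrix D. -/

import Mathlib

/-- A vector is `k`-sparse if it has at most `k` nonzero entries. -/
def KSparse {m : ℕ} (k : ℕ) (a : Fin m → ℝ) : Prop :=
  (Finset.univ.filter fun i => a i ≠ 0).card ≤ k

/-- Generic coefficients avoiding finitely many nonzero linear forms. -/
lemma exists_generic {n : ℕ} (A : Matrix (Fin n) (Fin n) ℝ) (T : Finset (Fin n)) :
    ∃ c : Fin n → ℝ, ∀ r : Fin n, (∃ t ∈ T, A r t ≠ 0) →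
      (∑ t ∈ T, A r t * c t) ≠ 0 := by
  by_contra h
  push_neg at h
  -- the kernels of the nonzero forms cover the space
  set B := {r : Fin n // ∃ t ∈ T, A r t ≠ 0}
  have : Finite B := Subtype.finite
  let f : B → ((Fin n → ℝ) →ₗ[ℝ] ℝ) := fun r =>
    ∑ t ∈ T, A r.1 t • (LinearMap.proj t : (Fin n → ℝ) →ₗ[ℝ] ℝ)
  have hcov : ⋃ r : B, ((LinearMap.ker (f r)) : Set (Fin n → ℝ)) = Set.univ := by
    ext c
    simp only [Set.mem_iUnion, Set.mem_univ, iff_true, SetLike.mem_coe,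
      LinearMap.mem_ker]
    obtain ⟨r, hr, hr0⟩ := h c
    refine ⟨⟨r, hr⟩, ?_⟩
    simpa [f, LinearMap.sum_apply, smul_eq_mul] using hr0
  obtain ⟨r, hr⟩ := Subspace.exists_eq_top_of_iUnion_eq_univ hcov
  rw [LinearMap.ker_eq_top] at hr
  obtain ⟨t0, ht0, ht0n⟩ := r.2
  have := congrArg (fun g => g (Pi.single t0 (1:ℝ))) hr
  simp only [LinearMap.zero_apply, f, LinearMap.sum_apply, LinearMap.smul_apply,
    LinearMap.proj_apply, smul_eq_mul] at this
  rw [Finset.sum_eq_single t0 (fun b _ hb => by simp [Pi.single_eq_of_ne hb])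
    (fun h => absurd ht0 h)] at this
  simp [Pi.single_eq_same] at this
  exact ht0n this

open Classical in
/-- Key: any `k` columns touch at most `k` rows. -/
lemma key {n k : ℕ} (A : Matrix (Fin n) (Fin n) ℝ)
    (hsp : ∀ a : Fin n → ℝ, KSparse k a → KSparse k (A.mulVec a))
    (T : Finset (Fin n)) (hT : T.card = k) :
    (Finset.univ.filter fun r => ∃ t ∈ T, A r t ≠ 0).card ≤ k := by
  obtain ⟨c, hc⟩ := exists_generic A T
  set x : Fin n → ℝ := fun j => if j ∈ T then c j else 0 with hxdef
  have hx : KSparse k x := by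
    unfold KSparse
    calc (Finset.univ.filter fun i => x i ≠ 0).card ≤ T.card := by
          apply Finset.card_le_card
          intro i hi
          simp only [Finset.mem_filter, hxdef] at hi
          by_contra hiT
          exact hi.2 (by simp [hiT])
      _ = k := hT
  have hAx := hsp x hx
  unfold KSparse at hAx
  refine le_trans (Finset.card_le_card ?_) hAx
  intro r hr
  simp only [Finset.mem_filter, Finset.mem_univ, true_and] at hr ⊢
  have : A.mulVec x r = ∑ t ∈ T, A r t * c t := by
    unfold Matrix.mulVec dotProduct
    rw [← Finset.sum_subset (Finset.subset_univ T)
      (fun j _ hj => by simp [hxdef, hj])]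
    exact Finset.sum_congr rfl fun t ht => by simp [hxdef, ht]
  rw [this]
  exact hc r hr

theorem stmt1 {n k : ℕ} (hk : 0 < k) (hkn : k < n)
    (A : Matrix (Fin n) (Fin n) ℝ) (hA : IsUnit A)
    (hsp : ∀ a : Fin n → ℝ, KSparse k a → KSparse k (A.mulVec a)) :
    ∃ (σ : Equiv.Perm (Fin n)) (d : Fin n → ℝ),
      (∀ i, d i ≠ 0) ∧ A = σ.permMatrix ℝ * Matrix.diagonal d := by
  classical
  have hdet : A.det ≠ 0 := by
    have := (Matrix.isUnit_iff_isUnit_det A).mp hA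
    exact IsUnit.ne_zero this
  -- find a permutation with all diagonal-type entries nonzero
  obtain ⟨σ, hσ⟩ : ∃ σ : Equiv.Perm (Fin n), ∀ i, A (σ i) i ≠ 0 := by
    by_contra h
    push_neg at h
    apply hdet
    rw [Matrix.det_apply]
    apply Finset.sum_eq_zero
    intro σ _
    obtain ⟨i, hi⟩ := h σ
    have hp : ∏ i : Fin n, A (σ i) i = 0 := Finset.prod_eq_zero (Finset.mem_univ i) hi
    rw [hp, smul_zero]
  -- all off-"matching" entries vanish
  have hz : ∀ r i, r ≠ σ i → A r i = 0 := by
    intro r i hri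
    by_contra hAri
    set j := σ.symm r with hj
    have hji : j ≠ i := fun hh => hri (by rw [← hh, hj]; simp)
    -- build T of card k containing i, not j
    have hcard : k - 1 ≤ ((Finset.univ.erase j).erase i).card := by
      have h1 : (Finset.univ.erase j).card = n - 1 := by
        rw [Finset.card_erase_of_mem (Finset.mem_univ j), Finset.card_univ,
          Fintype.card_fin]
      have h2 : ((Finset.univ.erase j).erase i).card = n - 1 - 1 := by
        rw [Finset.card_erase_of_mem (Finset.mem_erase.mpr ⟨hji.symm, Finset.mem_univ i⟩), h1]
      omega
    obtain ⟨t, hts, htc⟩ := Finset.exists_subset_card_eq hcard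
    have hit : i ∉ t := fun hh => (Finset.mem_erase.mp (hts hh)).1 rfl
    set T := insert i t with hT
    have hTc : T.card = k := by
      rw [Finset.card_insert_of_notMem hit, htc]; omega
    have hjT : j ∉ T := by
      simp only [hT, Finset.mem_insert]
      rintro (h | h)
      · exact hji h
      · exact (Finset.mem_erase.mp (Finset.mem_erase.mp (hts h)).2).1 rfl
    have hkey := key A hsp T hTc
    have hsub : insert r (T.image σ) ⊆
        Finset.univ.filter fun r => ∃ t ∈ T, A r t ≠ 0 := by
      intro s hs
      simp only [Finset.mem_insert, Finset.mem_image] at hs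
      simp only [Finset.mem_filter, Finset.mem_univ, true_and]
      rcases hs with rfl | ⟨a, ha, rfl⟩
      · exact ⟨i, Finset.mem_insert_self i t, hAri⟩
      · exact ⟨a, ha, hσ a⟩
    have hrT : r ∉ T.image σ := by
      simp only [Finset.mem_image]
      rintro ⟨a, ha, rfl⟩
      exact hjT (by rwa [hj, Equiv.symm_apply_apply])
    have : k + 1 ≤ (Finset.univ.filter fun r => ∃ t ∈ T, A r t ≠ 0).card := by
      calc k + 1 = (insert r (T.image σ)).card := by
            rw [Finset.card_insert_of_notMem hrT,
              Finset.card_image_of_injective _ σ.injective, hTc]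
        _ ≤ _ := Finset.card_le_card hsub
    omega
  refine ⟨σ⁻¹, fun i => A (σ i) i, fun i => hσ i, ?_⟩
  ext r i
  rw [Matrix.mul_diagonal]
  simp only [Equiv.Perm.permMatrix, PEquiv.toMatrix_apply, Equiv.toPEquiv_apply,
    Option.mem_def, Option.some.injEq]
  by_cases h : r = σ i
  · subst h
    rw [if_pos (by simp), one_mul]
  · rw [hz r i h, if_neg (by
      intro hh
      apply h
      rw [← hh]; simp), zero_mul]
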